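/- Let V be a finite set of size n and let C_1,…,C_s and D_1,…,D_s be subsets of V with |C_i| = |D_i| for every i and with D_1,…,D_s pairwise disjoint. If A is a uniformly random k-element subset of V, then Pr(A ∩ C_i ≠ ∅ for all i ∈ [s]) ≥ Pr(A ∩ D_i ≠ ∅ for all i ∈ [s]). -/

import Mathlib

open Filter

noncomputable section

/-- The collection of all `k`-element subsets of `Fin n`. -/
def kSets (n k : ℕ) : Finset (Finset (Fin n)) := Finset.powersetCard k Finset.univ

open Classical in
/-- The probability that the random hypergraph `H_k(n,p)` (each `k`-subset of `[n]`
present independently with probability `p`) satisfies the property `P`. -/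
def hprob (n k : ℕ) (p : ℝ) (P : Finset (Finset (Fin n)) → Prop) : ℝ :=
  ∑ H ∈ (kSets n k).powerset,
    if P H then p ^ H.card * (1 - p) ^ ((kSets n k).card - H.card) else 0

/-- A family of sets is intersecting (a clique) if no two of its members are disjoint. -/
def IsClique {n : ℕ} (C : Finset (Finset (Fin n))) : Prop :=
  ∀ A ∈ C, ∀ B ∈ C, (A ∩ B).Nonempty

/-- The star of `x` in `H`: the set of edges of `H` containing `x`. -/
def starOf {n : ℕ} (H : Finset (Finset (Fin n))) (x : Fin n) : Finset (Finset (Fin n)) :=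
  H.filter (fun A => x ∈ A)

/-- The degree of `x` in `H`. -/
def vdeg {n : ℕ} (H : Finset (Finset (Fin n))) (x : Fin n) : ℕ := (starOf H x).card

/-- The maximum degree of `H`. -/
def maxDegree {n : ℕ} (H : Finset (Finset (Fin n))) : ℕ :=
  Finset.univ.sup (vdeg H)

/-- A family is nontrivial if it is not contained in a star. -/
def IsNontrivial {n : ℕ} (C : Finset (Finset (Fin n))) : Prop :=
  ¬ ∃ x : Fin n, ∀ A ∈ C, x ∈ A

/-- `H` satisfies (strong) EKR if every maximum-size intersecting subfamily of `H`
is a star of `H`. -/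
def EKR {n : ℕ} (H : Finset (Finset (Fin n))) : Prop :=
  ∀ C ⊆ H, IsClique C → (∀ D ⊆ H, IsClique D → D.card ≤ C.card) →
    ∃ x : Fin n, C = starOf H x

open Classical in
/-- `q = q(n,k)`: the probability that two independent uniform `k`-subsets of `[n]` meet. -/
def interProb (n k : ℕ) : ℝ :=
  ((((kSets n k) ×ˢ (kSets n k)).filter fun AB => (AB.1 ∩ AB.2).Nonempty).card : ℝ) /
    ((kSets n k).card : ℝ) ^ 2

/-- `φ = p·C(n-1,k-1)`, the expected degree of a vertex. -/
def phi (n k : ℕ) (p : ℝ) : ℝ := p * ((n - 1).choose (k - 1) : ℝ)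

/-- `μ̄ = φ·n/k`, the expected number of edges. -/
def mubar (n k : ℕ) (p : ℝ) : ℝ := phi n k p * n / k

/-- The generalized binomial coefficient `C(x,t) = x(x-1)⋯(x-t+1)/t!`. -/
def gchoose (x : ℝ) (t : ℕ) : ℝ := (∏ i ∈ Finset.range t, (x - i)) / (t.factorial : ℝ)

/-- `Λ(t) = C(μ̄,t)·q^{C(t,2)}`. -/
def Lam (n k : ℕ) (p : ℝ) (t : ℕ) : ℝ :=
  gchoose (mubar n k p) t * interProb n k ^ t.choose 2

/-- `Λ'(t)`: equals `0` for `t ≤ 2` and `Λ(t)` otherwise. -/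
def Lam' (n k : ℕ) (p : ℝ) (t : ℕ) : ℝ := if t ≤ 2 then 0 else Lam n k p t

open Classical in
/-- The probability of `E` for a uniform sample from the finite set `s`. -/
def uprob {α : Type*} (s : Finset α) (E : α → Prop) : ℝ :=
  ((s.filter E).card : ℝ) / (s.card : ℝ)

open Classical in
/-- The probability of `E` under the probability mass function `w` on `Ω`. -/
def wprob {Ω : Type*} [Fintype Ω] (w : Ω → ℝ) (E : Ω → Prop) : ℝ :=
  ∑ ω ∈ Finset.univ.filter E, w ω

open Classical in
/-- The probability that the family `{A_1,…,A_m}` formed by `m` independent uniform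
`k`-subsets of `[n]` satisfies `P`. -/
def iidprob (n k m : ℕ) (P : Finset (Finset (Fin n)) → Prop) : ℝ :=
  uprob ((Finset.univ : Finset (Fin m → Finset (Fin n))).filter fun f => ∀ i, f i ∈ kSets n k)
    (fun f => P (Finset.image f Finset.univ))

open Classical in
/-- The probability that the tuple `(A_1,…,A_m)` of independent uniform `k`-subsets of `[n]`
satisfies `P`. -/
def tupleProb (n k m : ℕ) (P : (Fin m → Finset (Fin n)) → Prop) : ℝ :=
  uprob ((Finset.univ : Finset (Fin m → Finset (Fin n))).filter fun f => ∀ i, f i ∈ kSets n k) P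

/-- `Pr(Bin(M,p) ≥ θ)`. -/
def binomProbGe (M : ℕ) (p : ℝ) (θ : ℕ) : ℝ :=
  ∑ j ∈ Finset.Icc θ M, (M.choose j : ℝ) * p ^ j * (1 - p) ^ (M - j)

/-- `φ* = log³ n / log(1/q)`. -/
def phiStar (n k : ℕ) : ℝ := (Real.log n) ^ 3 / Real.log (1 / interProb n k)

/-- `α₁`: the largest integer `t` with `Pr(Bin(C(n-1,k-1),p) ≥ t) ≥ ψ/n`, where `ψ = log n`. -/
def alpha1 (n k : ℕ) (p : ℝ) : ℕ :=
  sSup {t : ℕ | Real.log n / n ≤ binomProbGe ((n - 1).choose (k - 1)) p t}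

/-- `α₂ = min{t : Λ(t) ≤ σ}`. -/
def alpha2 (n k : ℕ) (p σn : ℝ) : ℕ := sInf {t : ℕ | Lam n k p t ≤ σn}

/-- `α = max{α₁, α₂}`. -/
def alphaP (n k : ℕ) (p σn : ℝ) : ℕ := max (alpha1 n k p) (alpha2 n k p σn)

/-- `γ = min{α, φ*/3}`. -/
def gammaP (n k : ℕ) (p σn : ℝ) : ℕ := min (alphaP n k p σn) ⌊phiStar n k / 3⌋₊

/-- `τ = (1-ε)·γ`. -/
def tauP (ε : ℝ) (n k : ℕ) (p σn : ℝ) : ℝ := (1 - ε) * (gammaP n k p σn : ℝ)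

/-- `λ = max{√(log n)/log(1/q), 2·√(log n/log(1/q))}`. -/
def lamP (n k : ℕ) : ℝ :=
  max (Real.sqrt (Real.log n) / Real.log (1 / interProb n k))
    (2 * Real.sqrt (Real.log n / Real.log (1 / interProb n k)))

/-- `w̄ = max{φ²k²/n, 6 log n}`. -/
def wbar (n k : ℕ) (p : ℝ) : ℝ := max (phi n k p ^ 2 * (k : ℝ) ^ 2 / n) (6 * Real.log n)

/-- `q̄ = (1 + 2k²w̄/(q n²))·q`. -/
def qbar (n k : ℕ) (p : ℝ) : ℝ :=
  (1 + 2 * (k : ℝ) ^ 2 * wbar n k p / (interProb n k * (n : ℝ) ^ 2)) * interProb n k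

open Classical in
/-- The probability that the random subset of `H`, keeping each element independently
with probability `ρ`, satisfies `P`. -/
def sprob {β : Type*} [DecidableEq β] (H : Finset β) (ρ : ℝ) (P : Finset β → Prop) : ℝ :=
  ∑ G ∈ H.powerset, if P G then ρ ^ G.card * (1 - ρ) ^ (H.card - G.card) else 0

/-- The degree of `v` in the multiset `{f 0, …, f (m-1)}` (with multiplicity). -/
def tdeg {n m : ℕ} (f : Fin m → Finset (Fin n)) (v : Fin n) : ℕ :=
  (Finset.univ.filter fun i => v ∈ f i).card

/-- An increasing (up-)event in `{0,1}^ι`. -/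
def IncrEvent {ι : Type*} (A : Set (ι → Bool)) : Prop :=
  ∀ x y : ι → Bool, y ≤ x → y ∈ A → x ∈ A

/-- The coordinate `i` affects the event `A`. -/
def Affects {ι : Type*} (i : ι) (A : Set (ι → Bool)) : Prop :=
  ∃ η ∈ A, ∃ ν, ν ∉ A ∧ ∀ j, j ≠ i → η j = ν j

/-- Negative association of a family of `{0,1}`-valued random variables, defined on the
finite probability space `Ω` with probability mass function `w`. -/
def NegAssoc {Ω ι : Type*} [Fintype Ω] (w : Ω → ℝ) (X : ι → Ω → Bool) : Prop :=
  ∀ A B : Set (ι → Bool), IncrEvent A → IncrEvent B →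
    (∀ i, ¬ (Affects i A ∧ Affects i B)) →
    wprob w (fun ω => (fun i => X i ω) ∈ A ∧ (fun i => X i ω) ∈ B) ≤
      wprob w (fun ω => (fun i => X i ω) ∈ A) * wprob w (fun ω => (fun i => X i ω) ∈ B)

/-- `X = X_1 + ⋯ + X_m` for `{0,1}`-valued random variables. -/
def bcount {Ω : Type*} {m : ℕ} (X : Fin m → Ω → Bool) (ω : Ω) : ℕ :=
  (Finset.univ.filter fun i => X i ω = true).card

end

section meetHelpers

variable {V : Type*} [Fintype V] [DecidableEq V]

open Classical in
/-- Number of `k`-subsets of `V` meeting every member of the family `F`. -/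
noncomputable def meetCnt (k : ℕ) {s : ℕ} (F : Fin s → Finset V) : ℕ :=
  ((Finset.powersetCard k (Finset.univ : Finset V)).filter
    (fun A => ∀ i, (A ∩ F i).Nonempty)).card

lemma meetCnt_le_of_inj {k s : ℕ} (F G : Fin s → Finset V) (g : V → V)
    (hg : Function.Injective g) (hmap : ∀ i, ∀ x ∈ F i, g x ∈ G i) :
    meetCnt k F ≤ meetCnt k G := by
  classical
  unfold meetCnt
  apply Finset.card_le_card_of_injOn (fun A => A.image g)
  · intro A hA
    simp only [Finset.mem_coe, Finset.mem_filter, Finset.mem_powersetCard] at hA ⊢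
    obtain ⟨⟨-, hcardA⟩, hmeet⟩ := hA
    refine ⟨⟨Finset.subset_univ _, by
      rw [Finset.card_image_of_injective _ hg]; exact hcardA⟩, fun i => ?_⟩
    obtain ⟨x, hx⟩ := hmeet i
    rw [Finset.mem_inter] at hx
    exact ⟨g x, Finset.mem_inter.2 ⟨Finset.mem_image_of_mem _ hx.1, hmap i x hx.2⟩⟩
  · intro A _ B _ h
    exact Finset.image_injective hg h

/-- Replacing one member of the family by a set of the same size disjoint from all
the others can only decrease the count. -/
lemma meetCnt_update_le {k s : ℕ} (F : Fin s → Finset V) (i0 : Fin s) (Cc Dd : Finset V)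
    (hCD : Cc.card = Dd.card)
    (hdisj : ∀ j, j ≠ i0 → Disjoint Dd (F j)) :
    meetCnt k (Function.update F i0 Dd) ≤ meetCnt k (Function.update F i0 Cc) := by
  classical
  have hsd : (Dd \ Cc).card = (Cc \ Dd).card := Finset.card_sdiff_comm hCD.symm
  let e := Finset.equivOfCardEq hsd
  set g : V → V := fun x =>
    if h : x ∈ Dd \ Cc then (e ⟨x, h⟩ : V) else
    if h' : x ∈ Cc \ Dd then (e.symm ⟨x, h'⟩ : V) else x with hgdef
  have hdd : ∀ x : V, x ∈ Dd \ Cc → x ∈ Cc \ Dd → False := by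
    intro x h1 h2
    rw [Finset.mem_sdiff] at h1 h2
    exact h1.2 h2.1
  have hg1 : ∀ (x : V) (h : x ∈ Dd \ Cc), g x = (e ⟨x, h⟩ : V) := by
    intro x h; rw [hgdef]; exact dif_pos h
  have hg2 : ∀ (x : V) (h : x ∈ Cc \ Dd), g x = (e.symm ⟨x, h⟩ : V) := by
    intro x h
    simp only [hgdef]
    rw [dif_neg (fun hc => hdd x hc h), dif_pos h]
  have hg3 : ∀ x : V, x ∉ Dd \ Cc → x ∉ Cc \ Dd → g x = x := by
    intro x h1 h2
    simp only [hgdef]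
    rw [dif_neg h1, dif_neg h2]
  have hinv : ∀ x, g (g x) = x := by
    intro x
    by_cases h : x ∈ Dd \ Cc
    · rw [hg1 x h]
      have hm : (e ⟨x, h⟩ : V) ∈ Cc \ Dd := (e ⟨x, h⟩).2
      rw [hg2 _ hm]
      have : (⟨(e ⟨x, h⟩ : V), hm⟩ : {y // y ∈ Cc \ Dd}) = e ⟨x, h⟩ := Subtype.ext rfl
      rw [this, Equiv.symm_apply_apply]
    · by_cases h' : x ∈ Cc \ Dd
      · rw [hg2 x h']
        have hm : (e.symm ⟨x, h'⟩ : V) ∈ Dd \ Cc := (e.symm ⟨x, h'⟩).2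
        rw [hg1 _ hm]
        have : (⟨(e.symm ⟨x, h'⟩ : V), hm⟩ : {y // y ∈ Dd \ Cc}) = e.symm ⟨x, h'⟩ :=
          Subtype.ext rfl
        rw [this, Equiv.apply_symm_apply]
      · rw [hg3 x h h', hg3 x h h']
  have hginj : Function.Injective g := Function.Involutive.injective hinv
  -- rewrite both counts as filtered counts over the common part
  have key : ∀ X : Finset V, meetCnt k (Function.update F i0 X) =
      (((Finset.powersetCard k (Finset.univ : Finset V)).filter
        (fun A => ∀ j, j ≠ i0 → (A ∩ F j).Nonempty)).filter
        (fun A => (A ∩ X).Nonempty)).card := by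
    intro X
    unfold meetCnt
    rw [Finset.filter_filter]
    congr 1
    apply Finset.filter_congr
    intro A _
    constructor
    · intro hall
      refine ⟨fun j hj => ?_, ?_⟩
      · have := hall j
        rwa [Function.update_apply, if_neg hj] at this
      · have := hall i0
        rwa [Function.update_self] at this
    · rintro ⟨h1, h2⟩ i
      rcases eq_or_ne i i0 with rfl | hi
      · rwa [Function.update_self]
      · rw [Function.update_apply, if_neg hi]
        exact h1 i hi
  rw [key Cc, key Dd]
  set M := (Finset.powersetCard k (Finset.univ : Finset V)).filter
      (fun A => ∀ j, j ≠ i0 → (A ∩ F j).Nonempty) with hM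
  have h1 := Finset.card_filter_add_card_filter_not
    (s := M) (p := fun A => (A ∩ Cc).Nonempty)
  have h2 := Finset.card_filter_add_card_filter_not
    (s := M) (p := fun A => (A ∩ Dd).Nonempty)
  have hneg : (M.filter (fun A => ¬ (A ∩ Cc).Nonempty)).card ≤
      (M.filter (fun A => ¬ (A ∩ Dd).Nonempty)).card := by
    apply Finset.card_le_card_of_injOn (fun A => A.image g)
    · intro A hA
      simp only [hM, Finset.mem_coe, Finset.mem_filter, Finset.mem_powersetCard,
        Finset.not_nonempty_iff_eq_empty] at hA ⊢
      obtain ⟨⟨⟨-, hcardA⟩, hmeet⟩, hCc⟩ := hA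
      have hAnotC : ∀ x ∈ A, x ∉ Cc := by
        intro x hx hxc
        have : x ∈ A ∩ Cc := Finset.mem_inter.2 ⟨hx, hxc⟩
        rw [hCc] at this
        exact absurd this (Finset.notMem_empty x)
      refine ⟨⟨⟨Finset.subset_univ _, by
        rw [Finset.card_image_of_injective _ hginj]; exact hcardA⟩, ?_⟩, ?_⟩
      · intro j hj
        obtain ⟨x, hx⟩ := hmeet j hj
        rw [Finset.mem_inter] at hx
        have hxD : x ∉ Dd := Finset.disjoint_right.1 (hdisj j hj) hx.2
        have hgx : g x = x := hg3 x (fun hc => hxD (Finset.mem_sdiff.1 hc).1)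
          (fun hc => hAnotC x hx.1 (Finset.mem_sdiff.1 hc).1)
        exact ⟨x, Finset.mem_inter.2 ⟨hgx ▸ Finset.mem_image_of_mem g hx.1, hx.2⟩⟩
      · rw [Finset.eq_empty_iff_forall_notMem]
        intro y hy
        rw [Finset.mem_inter] at hy
        obtain ⟨x, hxA, hxy⟩ := Finset.mem_image.1 hy.1
        by_cases hxD : x ∈ Dd
        · have h' : x ∈ Dd \ Cc := Finset.mem_sdiff.2 ⟨hxD, hAnotC x hxA⟩
          have : g x ∈ Cc \ Dd := hg1 x h' ▸ (e ⟨x, h'⟩).2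
          rw [hxy] at this
          exact (Finset.mem_sdiff.1 this).2 hy.2
        · have hgx : g x = x := hg3 x (fun hc => hxD (Finset.mem_sdiff.1 hc).1)
            (fun hc => hAnotC x hxA (Finset.mem_sdiff.1 hc).1)
          rw [hgx] at hxy
          exact hxD (hxy ▸ hy.2)
    · intro A _ B _ h
      exact Finset.image_injective hginj h
  omega

/-- Among pairwise disjoint families, the count only depends on the sizes
(one inequality suffices). -/
lemma meetCnt_disjoint_le {k s : ℕ} (E D : Fin s → Finset V)
    (hE : ∀ i j, i ≠ j → Disjoint (E i) (E j))
    (hD : ∀ i j, i ≠ j → Disjoint (D i) (D j))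
    (hcard : ∀ i, (D i).card = (E i).card) :
    meetCnt k D ≤ meetCnt k E := by
  classical
  have eP : ∀ i, {x // x ∈ D i} ≃ {x // x ∈ E i} := fun i => Finset.equivOfCardEq (hcard i)
  have hcompl : ((Finset.univ : Finset V) \ Finset.univ.biUnion D).card =
      ((Finset.univ : Finset V) \ Finset.univ.biUnion E).card := by
    rw [Finset.card_sdiff_of_subset (Finset.subset_univ _), Finset.card_sdiff_of_subset (Finset.subset_univ _),
      Finset.card_biUnion (fun i _ j _ hij => hD i j hij),
      Finset.card_biUnion (fun i _ j _ hij => hE i j hij)]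
    congr 1
    exact Finset.sum_congr rfl (fun i _ => hcard i)
  let eC := Finset.equivOfCardEq hcompl
  have hmemC : ∀ x : V, ¬ (∃ i, x ∈ D i) → x ∈ (Finset.univ : Finset V) \ Finset.univ.biUnion D := by
    intro x h
    refine Finset.mem_sdiff.2 ⟨Finset.mem_univ x, fun hc => h ?_⟩
    obtain ⟨i, -, hi⟩ := Finset.mem_biUnion.1 hc
    exact ⟨i, hi⟩
  set g : V → V := fun x =>
    if h : ∃ i, x ∈ D i then (eP h.choose ⟨x, h.choose_spec⟩ : V)
    else (eC ⟨x, hmemC x h⟩ : V) with hgdef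
  have hg1 : ∀ (x : V) (h : ∃ i, x ∈ D i),
      g x = (eP h.choose ⟨x, h.choose_spec⟩ : V) := by
    intro x h; rw [hgdef]; exact dif_pos h
  have hg2 : ∀ (x : V) (h : ¬ ∃ i, x ∈ D i), g x = (eC ⟨x, hmemC x h⟩ : V) := by
    intro x h; rw [hgdef]; exact dif_neg h
  have hg1' : ∀ (x : V) (i : Fin s) (hi : x ∈ D i), g x = (eP i ⟨x, hi⟩ : V) := by
    intro x i hi
    have h : ∃ j, x ∈ D j := ⟨i, hi⟩
    have hchoose : h.choose = i := by
      by_contra hne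
      exact Finset.disjoint_left.1 (hD h.choose i hne) h.choose_spec hi
    subst hchoose
    exact hg1 x h
  have hmap : ∀ i, ∀ x ∈ D i, g x ∈ E i := by
    intro i x hx
    rw [hg1' x i hx]
    exact (eP i ⟨x, hx⟩).2
  have hnot : ∀ (x : V) (h : ¬ ∃ i, x ∈ D i) (i : Fin s), g x ∉ E i := by
    intro x h i hc
    rw [hg2 x h] at hc
    have := (eC ⟨x, hmemC x h⟩).2
    rw [Finset.mem_sdiff] at this
    exact this.2 (Finset.mem_biUnion.2 ⟨i, Finset.mem_univ i, hc⟩)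
  have hginj : Function.Injective g := by
    intro x y hxy
    by_cases hx : ∃ i, x ∈ D i
    · obtain ⟨i, hi⟩ := hx
      by_cases hy : ∃ i, y ∈ D i
      · obtain ⟨j, hj⟩ := hy
        rw [hg1' x i hi, hg1' y j hj] at hxy
        have hij : i = j := by
          by_contra hne
          have hmem : (eP i ⟨x, hi⟩ : V) ∈ E j := by
            rw [hxy]; exact (eP j ⟨y, hj⟩).2
          exact Finset.disjoint_left.1 (hE i j hne) (eP i ⟨x, hi⟩).2 hmem
        subst hij
        have := (eP i).injective (Subtype.coe_injective hxy)
        exact congrArg Subtype.val this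
      · have h1 : g x ∈ E i := hmap i x hi
        have h2 := hnot y hy i
        rw [← hxy] at h2
        exact absurd h1 h2
    · by_cases hy : ∃ i, y ∈ D i
      · obtain ⟨i, hi⟩ := hy
        have h1 : g y ∈ E i := hmap i y hi
        have h2 := hnot x hx i
        rw [hxy] at h2
        exact absurd h1 h2
      · rw [hg2 x hx, hg2 y hy] at hxy
        have := eC.injective (Subtype.coe_injective hxy)
        exact congrArg Subtype.val this
  exact meetCnt_le_of_inj D E g hginj hmap

/-- Iteratively replace the members of `C` by fresh pairwise disjoint sets. -/
lemma exists_disjointify (k : ℕ) {s : ℕ} (C : Fin s → Finset V) (m : Fin s → ℕ)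
    (hm : ∀ i, (C i).card = m i) (hsum : ∑ i, m i ≤ Fintype.card V) :
    ∀ t : ℕ, t ≤ s → ∃ E : Fin s → Finset V,
      (∀ i, (E i).card = m i) ∧ (∀ i : Fin s, t ≤ i.1 → E i = C i) ∧
      (∀ i j : Fin s, i ≠ j → i.1 < t → Disjoint (E i) (E j)) ∧
      meetCnt k E ≤ meetCnt k C := by
  classical
  intro t
  induction t with
  | zero => exact fun _ => ⟨C, hm, fun _ _ => rfl,
      fun i j _ h => absurd h (Nat.not_lt_zero _), le_refl _⟩
  | succ t ih =>
    intro hts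
    obtain ⟨E, hEc, hEeq, hEd, hle⟩ := ih (Nat.le_of_succ_le hts)
    have hts' : t < s := hts
    set i0 : Fin s := ⟨t, hts'⟩ with hi0
    set U : Finset V := (Finset.univ.erase i0).biUnion E with hU
    have hroom : m i0 ≤ ((Finset.univ : Finset V) \ U).card := by
      have h1 : U.card ≤ ∑ j ∈ Finset.univ.erase i0, (E j).card :=
        Finset.card_biUnion_le
      have h2 : ∑ j ∈ Finset.univ.erase i0, (E j).card = ∑ j ∈ Finset.univ.erase i0, m j :=
        Finset.sum_congr rfl (fun j _ => hEc j)
      have h3 : m i0 + ∑ j ∈ Finset.univ.erase i0, m j = ∑ j, m j :=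
        Finset.add_sum_erase _ m (Finset.mem_univ i0)
      have h4 : ((Finset.univ : Finset V) \ U).card = Fintype.card V - U.card := by
        rw [Finset.card_sdiff_of_subset (Finset.subset_univ _), Finset.card_univ]
      omega
    obtain ⟨B, hBsub, hBcard⟩ := Finset.exists_subset_card_eq hroom
    have hBdisj : ∀ j, j ≠ i0 → Disjoint B (E j) := by
      intro j hj
      have hEj : E j ⊆ U := Finset.subset_biUnion_of_mem E
        (Finset.mem_erase.2 ⟨hj, Finset.mem_univ j⟩)
      exact Finset.disjoint_left.2 fun x hxB hxE =>
        (Finset.mem_sdiff.1 (hBsub hxB)).2 (hEj hxE)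
    refine ⟨Function.update E i0 B, ?_, ?_, ?_, ?_⟩
    · intro i
      rcases eq_or_ne i i0 with rfl | hi
      · rw [Function.update_self, hBcard]
      · rw [Function.update_apply, if_neg hi]; exact hEc i
    · intro i hi
      have hi' : i ≠ i0 := by
        intro hc; rw [hc] at hi; simp [hi0] at hi
      rw [Function.update_apply, if_neg hi']
      exact hEeq i (by omega)
    · intro i j hij hi
      rcases eq_or_ne i i0 with rfl | hi'
      · rw [Function.update_self, Function.update_apply, if_neg (Ne.symm hij)]
        exact hBdisj j (Ne.symm hij)
      · rw [Function.update_apply, if_neg hi']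
        rcases eq_or_ne j i0 with rfl | hj'
        · rw [Function.update_self]
          exact (hBdisj i hi').symm
        · rw [Function.update_apply, if_neg hj']
          have : i.1 < t := by
            have : i.1 ≠ t := fun hc => hi' (Fin.ext hc)
            omega
          exact hEd i j hij this
    · calc meetCnt k (Function.update E i0 B)
          ≤ meetCnt k (Function.update E i0 (E i0)) := by
            apply meetCnt_update_le E i0 (E i0) B
            · rw [hEc i0, hBcard]
            · exact hBdisj
        _ = meetCnt k E := by rw [Function.update_eq_self]
        _ ≤ meetCnt k C := hle

end meetHelpers

/-- **Proposition.** If `|C_i| = |D_i|` for all `i` and the `D_i` are pairwise disjoint,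
then for a uniform random `k`-subset `A` of `V`,
`Pr(A ∩ C_i ≠ ∅ ∀i) ≥ Pr(A ∩ D_i ≠ ∅ ∀i)`. -/
theorem meet_all_disjoint_minimizes
    (V : Type*) [Fintype V] [DecidableEq V] (s k : ℕ) (hk : k ≤ Fintype.card V)
    (C D : Fin s → Finset V)
    (hcard : ∀ i, (C i).card = (D i).card)
    (hdisj : ∀ i j, i ≠ j → Disjoint (D i) (D j)) :
    uprob (Finset.powersetCard k (Finset.univ : Finset V))
        (fun A => ∀ i, (A ∩ D i).Nonempty) ≤
      uprob (Finset.powersetCard k (Finset.univ : Finset V))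
        (fun A => ∀ i, (A ∩ C i).Nonempty) := by
  classical
  set m : Fin s → ℕ := fun i => (D i).card with hm
  have hsum : ∑ i, m i ≤ Fintype.card V := by
    have h1 : (Finset.univ.biUnion D).card = ∑ i, (D i).card :=
      Finset.card_biUnion (fun i _ j _ hij => hdisj i j hij)
    have h2 : (Finset.univ.biUnion D).card ≤ Fintype.card V := by
      rw [← Finset.card_univ]
      exact Finset.card_le_univ _
    simpa [hm, h1] using h2
  obtain ⟨E, hEc, -, hEd, hle⟩ :=
    exists_disjointify k C m (fun i => hcard i) hsum s le_rfl
  have hdle : meetCnt k D ≤ meetCnt k C := by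
    refine le_trans (meetCnt_disjoint_le E D ?_ hdisj ?_) hle
    · intro i j hij
      exact hEd i j hij i.isLt
    · intro i
      rw [hEc i]
  unfold meetCnt at hdle
  unfold uprob
  have hpos : (0 : ℝ) <
      ((Finset.powersetCard k (Finset.univ : Finset V)).card : ℝ) := by
    rw [Finset.card_powersetCard, Finset.card_univ]
    exact_mod_cast Nat.choose_pos hk
  rw [div_le_div_iff_of_pos_right hpos]
  norm_cast
  convert hdle using 3
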